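/- Let J be a linear generalized complex structure on W with classical tensors (A, π, σ), and V ⊆ W a subspace satisfying V ∩ π♯(ann V) = 0 and A(V) ⊆ V + im π♯. Then V + im π♯ = V ⊕ π♯(ann V). -/

import Mathlib

open LinearMap

lemma finrank_map_add_finrank_inf_ker {K M N : Type*} [Field K] [AddCommGroup M]
    [Module K M] [AddCommGroup N] [Module K N] [FiniteDimensional K M]
    (f : M →ₗ[K] N) (p : Submodule K M) :
    Module.finrank K (Submodule.map f p) + Module.finrank K (p ⊓ LinearMap.ker f : Submodule K M)
      = Module.finrank K p := by
  have h := LinearMap.finrank_range_add_finrank_ker (f.domRestrict p)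
  have hr : LinearMap.range (f.domRestrict p) = Submodule.map f p :=
    LinearMap.range_domRestrict p f
  have hk : LinearMap.ker (f.domRestrict p) = Submodule.comap p.subtype (LinearMap.ker f) := by
    ext x; simp [LinearMap.mem_ker]
  have hfin : Module.finrank K (Submodule.comap p.subtype (LinearMap.ker f))
      = Module.finrank K (p ⊓ LinearMap.ker f : Submodule K M) := by
    rw [← Submodule.map_comap_subtype]
    exact (Submodule.equivMapOfInjective p.subtype (Submodule.injective_subtype p)
      _).finrank_eq
  rw [hr, hk, hfin] at h
  simpa [Module.finrank] using h

/-- Let `(A, π, σ)` be the classical tensors of a linear generalized complex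
structure on `W` (so `π♯`, `σ♭` are skew and the structure equations hold).
If a subspace `V` satisfies `V ∩ π♯(ann V) = 0` and `A(V) ⊆ V + im π♯`, then
`V + im π♯ = V ⊕ π♯(ann V)`. -/
theorem sum_eq_direct_sum_with_annihilator
    (W : Type*) [AddCommGroup W] [Module ℝ W] [FiniteDimensional ℝ W]
    (A : W →ₗ[ℝ] W) (piSh : Module.Dual ℝ W →ₗ[ℝ] W)
    (sigFl : W →ₗ[ℝ] Module.Dual ℝ W)
    (hpi : ∀ α β : Module.Dual ℝ W, α (piSh β) = - β (piSh α))
    (hsig : ∀ X Y : W, sigFl X Y = - sigFl Y X)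
    (h1 : A ∘ₗ A + piSh ∘ₗ sigFl = -LinearMap.id)
    (h2 : piSh ∘ₗ A.dualMap = A ∘ₗ piSh)
    (h3 : sigFl ∘ₗ A = A.dualMap ∘ₗ sigFl)
    (V : Submodule ℝ W)
    (hV1 : V ⊓ Submodule.map piSh V.dualAnnihilator = ⊥)
    (hV2 : Submodule.map A V ≤ V ⊔ LinearMap.range piSh) :
    V ⊔ LinearMap.range piSh = V ⊔ Submodule.map piSh V.dualAnnihilator ∧
    V ⊓ Submodule.map piSh V.dualAnnihilator = ⊥ := by
  refine ⟨?_, hV1⟩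
  set U := LinearMap.range piSh with hU
  set M := Submodule.map piSh V.dualAnnihilator with hM
  -- kernel of piSh is the annihilator of its range (skewness)
  have hker : LinearMap.ker piSh = U.dualAnnihilator := by
    ext α
    simp only [LinearMap.mem_ker, Submodule.mem_dualAnnihilator]
    constructor
    · rintro h w ⟨β, rfl⟩
      simp [hpi α β, h]
    · intro h
      rw [← Module.forall_dual_apply_eq_zero_iff (R := ℝ)]
      intro β
      rw [hpi β α]
      simp [h (piSh β) ⟨β, rfl⟩]
  have hann : V.dualAnnihilator ⊓ LinearMap.ker piSh = (V ⊔ U).dualAnnihilator := by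
    rw [hker, Submodule.dualAnnihilator_sup_eq]
  -- dimension counts
  have e1 : Module.finrank ℝ M
      + Module.finrank ℝ ((V ⊔ U).dualAnnihilator) = Module.finrank ℝ V.dualAnnihilator := by
    rw [← hann, hM]
    exact finrank_map_add_finrank_inf_ker piSh V.dualAnnihilator
  have eV : Module.finrank ℝ V + Module.finrank ℝ V.dualAnnihilator = Module.finrank ℝ W := by
    have := LinearEquiv.finrank_eq (R := ℝ) (M := W ⧸ V)
      (N := V.dualAnnihilator) (Subspace.quotEquivAnnihilator V)
    have h2' := Submodule.finrank_quotient_add_finrank V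
    omega
  have eVU : Module.finrank ℝ (V ⊔ U : Submodule ℝ W)
      + Module.finrank ℝ ((V ⊔ U).dualAnnihilator) = Module.finrank ℝ W := by
    have := LinearEquiv.finrank_eq (R := ℝ) (M := W ⧸ (V ⊔ U))
      (N := (V ⊔ U).dualAnnihilator) (Subspace.quotEquivAnnihilator (V ⊔ U))
    have h2' := Submodule.finrank_quotient_add_finrank (V ⊔ U)
    omega
  have eSum : Module.finrank ℝ (V ⊔ M : Submodule ℝ W)
      = Module.finrank ℝ V + Module.finrank ℝ M := by
    have h := Submodule.finrank_sup_add_finrank_inf_eq V M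
    rw [hV1] at h
    simpa using h
  have hle : V ⊔ M ≤ V ⊔ U := by
    refine sup_le_sup_left ?_ V
    rw [hM, hU]
    exact LinearMap.map_le_range
  have hrank : Module.finrank ℝ (V ⊔ U : Submodule ℝ W)
      ≤ Module.finrank ℝ (V ⊔ M : Submodule ℝ W) := by omega
  exact (Submodule.eq_of_le_of_finrank_le hle hrank).symm
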